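/- Let {x_i}_{i=1}^m be a unit-norm frame for ℝ⁴. Suppose there exist four linearly independent vectors x_1, x_2, x_3, x_4 among the frame vectors such that ⟨x_2, x_4⟩ = 0, ⟨x_3, x_4⟩ = 0, and ⟨x_1, x_4⟩ ≠ 0. Then {x_i}_{i=1}^m is piecewise scalable: there exist an orthogonal projection P on ℝ⁴ and real constants a_1,...,a_m, b_1,...,b_m such that {a_i P x_i + b_i (I−P) x_i}_{i=1}^m is a Parseval frame for ℝ⁴. -/

import Mathlib

open scoped RealInnerProductSpace
open Finset

noncomputable section

local notation "E4" => EuclideanSpace ℝ (Fin 4)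

lemma parseval_of_on (V : Fin 4 → E4) (hV : Orthonormal ℝ V) (y : E4) :
    ∑ k, ⟪y, V k⟫ ^ 2 = ‖y‖ ^ 2 := by
  have hcard : Fintype.card (Fin 4) = Module.finrank ℝ E4 := by
    simp [finrank_euclideanSpace_fin]
  let B := basisOfLinearIndependentOfCardEqFinrank hV.linearIndependent hcard
  have hB : ⇑B = V := coe_basisOfLinearIndependentOfCardEqFinrank _ _
  have hBon : Orthonormal ℝ B := by rwa [hB]
  let OB := B.toOrthonormalBasis hBon
  have hOB : ⇑OB = V := by
    rw [Module.Basis.coe_toOrthonormalBasis, hB]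
  have := OB.sum_inner_mul_inner y y
  rw [real_inner_self_eq_norm_sq] at this
  rw [← this]
  refine Finset.sum_congr rfl fun k _ => ?_
  rw [hOB, sq, real_inner_comm]

lemma aux_norm (z : E4) (h : ⟪z, z⟫ = (1:ℝ)) : ‖z‖ = 1 := by
  have h' : ‖z‖ ^ 2 = 1 := by rw [← real_inner_self_eq_norm_sq]; exact h
  nlinarith [norm_nonneg z]

lemma aux_s (d s : ℝ) (hs2 : s ^ 2 = (1 + d ^ 2) / 2) (hd2 : d ^ 2 < 1) : s ^ 2 < 1 := by
  nlinarith

lemma aux_t (d s t : ℝ) (hs2 : s ^ 2 = (1 + d ^ 2) / 2) (hd2 : d ^ 2 < 1)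
    (hspos : 0 < s) (ht : t = d / s) : t ^ 2 < 1 := by
  rw [ht, div_pow, hs2, div_lt_one (by positivity)]
  nlinarith

lemma exists_z (x1 x2 x3 x4 : E4)
    (hLI : LinearIndependent ℝ ![x1, x2, x3, x4])
    (h2 : ‖x2‖ = 1) (h3 : ‖x3‖ = 1)
    (h24 : ⟪x2, x4⟫ = 0) (h34 : ⟪x3, x4⟫ = 0) :
    ∃ z : E4, ‖z‖ = 1 ∧ ⟪z, x1⟫ ≠ 0 ∧ ⟪z, x4⟫ = 0 ∧
      ⟪z, x2⟫ * ⟪z, x3⟫ = ⟪x2, x3⟫ ∧ ⟪z, x2⟫ ^ 2 < 1 ∧ ⟪z, x3⟫ ^ 2 < 1 := by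
  set d : ℝ := ⟪x2, x3⟫ with hd
  -- pair linear independence
  have hpair : LinearIndependent ℝ ![x3, x2] := by
    have hf : ![x3, x2] = ![x1, x2, x3, x4] ∘ ![2, 1] := by
      funext i; fin_cases i <;> rfl
    rw [hf]
    exact hLI.comp ![2,1] (by decide)
  have hww : ⟪x3 - d • x2, x3 - d • x2⟫ = 1 - d ^ 2 := by
    have hc : ⟪x3, x2⟫ = d := by rw [real_inner_comm]
    simp only [inner_sub_left, inner_sub_right, real_inner_smul_left, real_inner_smul_right]
    rw [real_inner_self_eq_norm_sq, real_inner_self_eq_norm_sq, h2, h3, hc]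
    ring
  have hd2 : d ^ 2 < 1 := by
    rcases lt_or_ge (d ^ 2) 1 with h | h
    · exact h
    · exfalso
      have h0 : (0:ℝ) ≤ 1 - d ^ 2 := by rw [← hww]; exact real_inner_self_nonneg
      have heq : (1:ℝ) - d ^ 2 = 0 := le_antisymm (by linarith) h0
      have : x3 - d • x2 = 0 := by
        rw [← inner_self_eq_zero (𝕜 := ℝ), hww, heq]
      have hx3 : x3 = d • x2 := by
        rw [sub_eq_zero] at this; exact this
      rw [linearIndependent_fin2] at hpair
      exact hpair.2 d hx3.symm
  have h1md : (0:ℝ) < 1 - d ^ 2 := by linarith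
  -- orthogonal unit vector e
  have htriple : LinearIndependent ℝ ![x2, x3, x4] := by
    have hf : ![x2, x3, x4] = ![x1, x2, x3, x4] ∘ ![1, 2, 3] := by
      funext i; fin_cases i <;> rfl
    rw [hf]; exact hLI.comp ![1,2,3] (by decide)
  set K : Submodule ℝ E4 := Submodule.span ℝ (Set.range ![x2, x3, x4]) with hK
  have hKfr : Module.finrank ℝ K = 3 := by
    rw [hK, finrank_span_eq_card htriple]; simp
  have hKne : K ≠ ⊤ := by
    intro h
    rw [h] at hKfr
    have : Module.finrank ℝ (⊤ : Submodule ℝ E4) = 4 := by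
      rw [finrank_top]; simp [finrank_euclideanSpace_fin]
    omega
  have hKbot : Kᗮ ≠ ⊥ := fun h => hKne (Submodule.orthogonal_eq_bot_iff.1 h)
  obtain ⟨e₀, he₀K, he₀⟩ := Submodule.exists_mem_ne_zero_of_ne_bot hKbot
  set e : E4 := ‖e₀‖⁻¹ • e₀ with he
  have heK : e ∈ Kᗮ := Submodule.smul_mem _ _ he₀K
  have hene : ‖e‖ = 1 := norm_smul_inv_norm he₀
  have hKe : ∀ u ∈ K, ⟪u, e⟫ = 0 := (Submodule.mem_orthogonal K e).1 heK
  have hx2K : x2 ∈ K := Submodule.subset_span ⟨0, rfl⟩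
  have hx3K : x3 ∈ K := Submodule.subset_span ⟨1, rfl⟩
  have hx4K : x4 ∈ K := Submodule.subset_span ⟨2, rfl⟩
  have he2 : ⟪x2, e⟫ = 0 := hKe _ hx2K
  have he3 : ⟪x3, e⟫ = 0 := hKe _ hx3K
  have he4 : ⟪x4, e⟫ = 0 := hKe _ hx4K
  have hwK : x3 - d • x2 ∈ K := Submodule.sub_mem _ hx3K (Submodule.smul_mem _ _ hx2K)
  have hwe : ⟪x3 - d • x2, e⟫ = 0 := hKe _ hwK
  have hee : ⟪e, e⟫ = (1:ℝ) := by
    rw [real_inner_self_eq_norm_sq, hene]; norm_num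
  have hex1 : ⟪e, x1⟫ ≠ 0 := by
    intro h0
    have hspan : Submodule.span ℝ (Set.range ![x1, x2, x3, x4]) = ⊤ :=
      hLI.span_eq_top_of_card_eq_finrank (by simp [finrank_euclideanSpace_fin])
    have hle : Submodule.span ℝ (Set.range ![x1, x2, x3, x4]) ≤ (ℝ ∙ e)ᗮ := by
      rw [Submodule.span_le]
      rintro _ ⟨i, rfl⟩
      rw [SetLike.mem_coe, Submodule.mem_orthogonal_singleton_iff_inner_right]
      fin_cases i
      · exact h0
      · rw [real_inner_comm]; exact he2
      · rw [real_inner_comm]; exact he3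
      · rw [real_inner_comm]; exact he4
    rw [hspan] at hle
    have : ⟪e, e⟫ = (0:ℝ) := by
      have := hle (Submodule.mem_top (x := e))
      rw [Submodule.mem_orthogonal_singleton_iff_inner_right] at this
      exact this
    rw [hee] at this; norm_num at this
  -- scalars
  set s : ℝ := Real.sqrt ((1 + d ^ 2) / 2) with hsdef
  have hs2 : s ^ 2 = (1 + d ^ 2) / 2 := Real.sq_sqrt (by positivity)
  have hspos : 0 < s := Real.sqrt_pos.2 (by positivity)
  set t : ℝ := d / s with htdef
  have hst : s * t = d := by rw [htdef]; field_simp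
  have ht2 : t ^ 2 = d ^ 2 / s ^ 2 := by rw [htdef, div_pow]
  set β : ℝ := d / (2 * s) with hβ
  set γ : ℝ := Real.sqrt ((1 - d ^ 2) / (2 * (1 + d ^ 2))) with hγ
  have hγ2 : γ ^ 2 = (1 - d ^ 2) / (2 * (1 + d ^ 2)) := Real.sq_sqrt (by positivity)
  have hγpos : 0 < γ := Real.sqrt_pos.2 (by positivity)
  set w : E4 := x3 - d • x2 with hw
  set base : E4 := s • x2 + β • w with hbase
  set ε : ℝ := if ⟪base + γ • e, x1⟫ = 0 then (-1 : ℝ) else 1 with hε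
  have hε2 : ε ^ 2 = 1 := by
    rw [hε]; split <;> norm_num
  set z : E4 := base + (ε * γ) • e with hzdef
  have a22 : ⟪x2, x2⟫ = (1:ℝ) := by rw [real_inner_self_eq_norm_sq, h2, one_pow]
  have a33 : ⟪x3, x3⟫ = (1:ℝ) := by rw [real_inner_self_eq_norm_sq, h3, one_pow]
  have a23 : ⟪x2, x3⟫ = d := hd.symm
  have a32 : ⟪x3, x2⟫ = d := by rw [real_inner_comm]
  have b2 : ⟪e, x2⟫ = (0:ℝ) := by rw [real_inner_comm]; exact he2
  have b3 : ⟪e, x3⟫ = (0:ℝ) := by rw [real_inner_comm]; exact he3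
  have b4 : ⟪e, x4⟫ = (0:ℝ) := by rw [real_inner_comm]; exact he4
  have hzx2 : ⟪z, x2⟫ = s := by
    rw [hzdef, hbase, hw]
    simp only [inner_add_left, inner_sub_left, real_inner_smul_left]
    rw [a22, a32, b2]
    ring
  have hzx3 : ⟪z, x3⟫ = t := by
    rw [hzdef, hbase, hw]
    simp only [inner_add_left, inner_sub_left, real_inner_smul_left]
    rw [a23, a33, b3, hβ, htdef]
    field_simp
    linear_combination (2 * d) * hs2
  have hzx4 : ⟪z, x4⟫ = 0 := by
    rw [hzdef, hbase, hw]
    simp only [inner_add_left, inner_sub_left, real_inner_smul_left]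
    rw [h24, h34, b4]
    ring
  have hzz : ⟪z, z⟫ = 1 := by
    rw [hzdef, hbase, hw]
    simp only [inner_add_left, inner_add_right, inner_sub_left, inner_sub_right,
      real_inner_smul_left, real_inner_smul_right]
    rw [a22, a33, a23, a32, b2, b3, he2, he3, hee]
    have key : s ^ 2 + β ^ 2 * (1 - d ^ 2) + (ε * γ) ^ 2 = 1 := by
      have k1 : (ε * γ) ^ 2 = (1 - d ^ 2) / (2 * (1 + d ^ 2)) := by
        rw [mul_pow, hε2, one_mul, hγ2]
      have k2 : β ^ 2 = d ^ 2 / (4 * s ^ 2) := by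
        rw [hβ, div_pow]; ring_nf
      rw [k1, k2, hs2]
      have h1pd : (0:ℝ) < 1 + d ^ 2 := by positivity
      field_simp
      ring
    linear_combination key
  have hzx1 : ⟪z, x1⟫ ≠ 0 := by
    by_cases hcase : ⟪base + γ • e, x1⟫ = 0
    · intro h0
      rw [hzdef, hε, if_pos hcase] at h0
      simp only [inner_add_left, real_inner_smul_left] at h0 hcase
      have hmul : γ * ⟪e, x1⟫ = 0 := by linarith
      rcases mul_eq_zero.1 hmul with h | h
      · exact hγpos.ne' h
      · exact hex1 h
    · rw [hzdef, hε, if_neg hcase, one_mul]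
      exact hcase
  refine ⟨z, aux_norm z hzz, hzx1, hzx4, ?_, ?_, ?_⟩
  · rw [hzx2, hzx3, hst, hd]
  · rw [hzx2]; exact aux_s d s hs2 hd2
  · rw [hzx3]; exact aux_t d s t hs2 hd2 hspos htdef

lemma on_family (x2 x3 x4 z : E4) (s t : ℝ)
    (h2 : ‖x2‖ = 1) (h3 : ‖x3‖ = 1) (h4 : ‖x4‖ = 1)
    (h24 : ⟪x2, x4⟫ = 0) (h34 : ⟪x3, x4⟫ = 0)
    (hz : ‖z‖ = 1) (hz4 : ⟪z, x4⟫ = 0)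
    (hs : ⟪z, x2⟫ = s) (ht : ⟪z, x3⟫ = t)
    (hst : s * t = ⟪x2, x3⟫) (hs1 : s ^ 2 < 1) (ht1 : t ^ 2 < 1) :
    Orthonormal ℝ
      ![z, ‖x2 - s • z‖⁻¹ • (x2 - s • z), ‖x3 - t • z‖⁻¹ • (x3 - t • z), x4] := by
  have hzz : ⟪z, z⟫ = (1:ℝ) := by rw [real_inner_self_eq_norm_sq, hz, one_pow]
  have a22 : ⟪x2, x2⟫ = (1:ℝ) := by rw [real_inner_self_eq_norm_sq, h2, one_pow]
  have a33 : ⟪x3, x3⟫ = (1:ℝ) := by rw [real_inner_self_eq_norm_sq, h3, one_pow]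
  have a44 : ⟪x4, x4⟫ = (1:ℝ) := by rw [real_inner_self_eq_norm_sq, h4, one_pow]
  have hs' : ⟪x2, z⟫ = s := by rw [real_inner_comm]; exact hs
  have ht' : ⟪x3, z⟫ = t := by rw [real_inner_comm]; exact ht
  have hz4' : ⟪x4, z⟫ = 0 := by rw [real_inner_comm]; exact hz4
  have h24' : ⟪x4, x2⟫ = 0 := by rw [real_inner_comm]; exact h24
  have h34' : ⟪x4, x3⟫ = 0 := by rw [real_inner_comm]; exact h34
  have h23 : ⟪x2, x3⟫ = s * t := hst.symm
  have h32 : ⟪x3, x2⟫ = s * t := by rw [real_inner_comm]; exact hst.symm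
  have i22 : ⟪x2 - s • z, x2 - s • z⟫ = 1 - s ^ 2 := by
    simp only [inner_sub_left, inner_sub_right, real_inner_smul_left, real_inner_smul_right,
      hzz, a22, hs, hs']
    ring
  have i33 : ⟪x3 - t • z, x3 - t • z⟫ = 1 - t ^ 2 := by
    simp only [inner_sub_left, inner_sub_right, real_inner_smul_left, real_inner_smul_right,
      hzz, a33, ht, ht']
    ring
  have hv2ne : x2 - s • z ≠ 0 := by
    intro h
    rw [h, inner_zero_left] at i22
    nlinarith
  have hv3ne : x3 - t • z ≠ 0 := by
    intro h
    rw [h, inner_zero_left] at i33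
    nlinarith
  have hn2 : ‖x2 - s • z‖ ^ 2 = 1 - s ^ 2 := by rw [← real_inner_self_eq_norm_sq]; exact i22
  have hn3 : ‖x3 - t • z‖ ^ 2 = 1 - t ^ 2 := by rw [← real_inner_self_eq_norm_sq]; exact i33
  have hn2pos : 0 < ‖x2 - s • z‖ := norm_pos_iff.2 hv2ne
  have hn3pos : 0 < ‖x3 - t • z‖ := norm_pos_iff.2 hv3ne
  -- orthogonality raw facts
  have o12 : ⟪z, x2 - s • z⟫ = (0:ℝ) := by
    simp only [inner_sub_right, real_inner_smul_right, hzz, hs]; ring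
  have o13 : ⟪z, x3 - t • z⟫ = (0:ℝ) := by
    simp only [inner_sub_right, real_inner_smul_right, hzz, ht]; ring
  have o23 : ⟪x2 - s • z, x3 - t • z⟫ = (0:ℝ) := by
    simp only [inner_sub_left, inner_sub_right, real_inner_smul_left, real_inner_smul_right,
      hzz, h23, hs, hs', ht, ht']
    ring
  have o24 : ⟪x2 - s • z, x4⟫ = (0:ℝ) := by
    simp only [inner_sub_left, real_inner_smul_left, h24, hz4]; ring
  have o34 : ⟪x3 - t • z, x4⟫ = (0:ℝ) := by
    simp only [inner_sub_left, real_inner_smul_left, h34, hz4]; ring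
  have o12' : ⟪x2 - s • z, z⟫ = (0:ℝ) := by rw [real_inner_comm]; exact o12
  have o13' : ⟪x3 - t • z, z⟫ = (0:ℝ) := by rw [real_inner_comm]; exact o13
  have o23' : ⟪x3 - t • z, x2 - s • z⟫ = (0:ℝ) := by rw [real_inner_comm]; exact o23
  have o24' : ⟪x4, x2 - s • z⟫ = (0:ℝ) := by rw [real_inner_comm]; exact o24
  have o34' : ⟪x4, x3 - t • z⟫ = (0:ℝ) := by rw [real_inner_comm]; exact o34
  have d11 : ⟪‖x2 - s • z‖⁻¹ • (x2 - s • z), ‖x2 - s • z‖⁻¹ • (x2 - s • z)⟫ = (1:ℝ) := by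
    rw [real_inner_smul_left, real_inner_smul_right, i22, ← hn2, pow_two]
    field_simp
  have d22 : ⟪‖x3 - t • z‖⁻¹ • (x3 - t • z), ‖x3 - t • z‖⁻¹ • (x3 - t • z)⟫ = (1:ℝ) := by
    rw [real_inner_smul_left, real_inner_smul_right, i33, ← hn3, pow_two]
    field_simp
  rw [orthonormal_iff_ite]
  intro i j
  fin_cases i <;> fin_cases j
  · show ⟪z, z⟫ = if ((0:Fin 4) = 0) then (1:ℝ) else 0
    rw [if_pos rfl]; exact hzz
  · show ⟪z, ‖x2 - s • z‖⁻¹ • (x2 - s • z)⟫ = if ((0:Fin 4) = 1) then (1:ℝ) else 0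
    rw [if_neg (by decide)]; rw [real_inner_smul_right, o12, mul_zero]
  · show ⟪z, ‖x3 - t • z‖⁻¹ • (x3 - t • z)⟫ = if ((0:Fin 4) = 2) then (1:ℝ) else 0
    rw [if_neg (by decide)]; rw [real_inner_smul_right, o13, mul_zero]
  · show ⟪z, x4⟫ = if ((0:Fin 4) = 3) then (1:ℝ) else 0
    rw [if_neg (by decide)]; exact hz4
  · show ⟪‖x2 - s • z‖⁻¹ • (x2 - s • z), z⟫ = if ((1:Fin 4) = 0) then (1:ℝ) else 0
    rw [if_neg (by decide)]; rw [real_inner_smul_left, o12', mul_zero]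
  · show ⟪‖x2 - s • z‖⁻¹ • (x2 - s • z), ‖x2 - s • z‖⁻¹ • (x2 - s • z)⟫ = if ((1:Fin 4) = 1) then (1:ℝ) else 0
    rw [if_pos rfl]; exact d11
  · show ⟪‖x2 - s • z‖⁻¹ • (x2 - s • z), ‖x3 - t • z‖⁻¹ • (x3 - t • z)⟫ = if ((1:Fin 4) = 2) then (1:ℝ) else 0
    rw [if_neg (by decide)]; rw [real_inner_smul_left, real_inner_smul_right, o23, mul_zero, mul_zero]
  · show ⟪‖x2 - s • z‖⁻¹ • (x2 - s • z), x4⟫ = if ((1:Fin 4) = 3) then (1:ℝ) else 0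
    rw [if_neg (by decide)]; rw [real_inner_smul_left, o24, mul_zero]
  · show ⟪‖x3 - t • z‖⁻¹ • (x3 - t • z), z⟫ = if ((2:Fin 4) = 0) then (1:ℝ) else 0
    rw [if_neg (by decide)]; rw [real_inner_smul_left, o13', mul_zero]
  · show ⟪‖x3 - t • z‖⁻¹ • (x3 - t • z), ‖x2 - s • z‖⁻¹ • (x2 - s • z)⟫ = if ((2:Fin 4) = 1) then (1:ℝ) else 0
    rw [if_neg (by decide)]; rw [real_inner_smul_left, real_inner_smul_right, o23', mul_zero, mul_zero]
  · show ⟪‖x3 - t • z‖⁻¹ • (x3 - t • z), ‖x3 - t • z‖⁻¹ • (x3 - t • z)⟫ = if ((2:Fin 4) = 2) then (1:ℝ) else 0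
    rw [if_pos rfl]; exact d22
  · show ⟪‖x3 - t • z‖⁻¹ • (x3 - t • z), x4⟫ = if ((2:Fin 4) = 3) then (1:ℝ) else 0
    rw [if_neg (by decide)]; rw [real_inner_smul_left, o34, mul_zero]
  · show ⟪x4, z⟫ = if ((3:Fin 4) = 0) then (1:ℝ) else 0
    rw [if_neg (by decide)]; exact hz4'
  · show ⟪x4, ‖x2 - s • z‖⁻¹ • (x2 - s • z)⟫ = if ((3:Fin 4) = 1) then (1:ℝ) else 0
    rw [if_neg (by decide)]; rw [real_inner_smul_right, o24', mul_zero]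
  · show ⟪x4, ‖x3 - t • z‖⁻¹ • (x3 - t • z)⟫ = if ((3:Fin 4) = 2) then (1:ℝ) else 0
    rw [if_neg (by decide)]; rw [real_inner_smul_right, o34', mul_zero]
  · show ⟪x4, x4⟫ = if ((3:Fin 4) = 3) then (1:ℝ) else 0
    rw [if_pos rfl]; exact a44

/-- A finite family of vectors in `ℝⁿ` is a Parseval frame if
`∑ i, ⟪x, v i⟫² = ‖x‖²` for all `x`. -/
def IsParseval {n : ℕ} {ι : Type} [Fintype ι] (v : ι → EuclideanSpace ℝ (Fin n)) : Prop :=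
  ∀ x : EuclideanSpace ℝ (Fin n), ∑ i, ⟪x, v i⟫ ^ 2 = ‖x‖ ^ 2

/-- `P` is an orthogonal projection: idempotent and self-adjoint. -/
def IsOrthProj {n : ℕ} (P : EuclideanSpace ℝ (Fin n) →ₗ[ℝ] EuclideanSpace ℝ (Fin n)) : Prop :=
  P ∘ₗ P = P ∧ ∀ x y : EuclideanSpace ℝ (Fin n), ⟪P x, y⟫ = ⟪x, P y⟫

theorem stmt16 {m : ℕ} (x : Fin m → EuclideanSpace ℝ (Fin 4))
    (hframe : Submodule.span ℝ (Set.range x) = ⊤)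
    (hnorm : ∀ i, ‖x i‖ = 1)
    (h4 : ∃ i₁ i₂ i₃ i₄ : Fin m,
      LinearIndependent ℝ ![x i₁, x i₂, x i₃, x i₄] ∧
      ⟪x i₂, x i₄⟫ = 0 ∧ ⟪x i₃, x i₄⟫ = 0 ∧ ⟪x i₁, x i₄⟫ ≠ 0) :
    ∃ P : EuclideanSpace ℝ (Fin 4) →ₗ[ℝ] EuclideanSpace ℝ (Fin 4),
      IsOrthProj P ∧ ∃ a b : Fin m → ℝ,
        IsParseval (fun i => a i • P (x i) + b i • (x i - P (x i))) := by
  obtain ⟨i₁, i₂, i₃, i₄, hLI, h24, h34, h14⟩ := h4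
  have hinj := hLI.injective
  have hne : ∀ k l : Fin 4, k ≠ l →
      ![x i₁, x i₂, x i₃, x i₄] k ≠ ![x i₁, x i₂, x i₃, x i₄] l :=
    fun k l hkl h => hkl (hinj h)
  have ne12 : i₁ ≠ i₂ := fun h => hne 0 1 (by decide) (show x i₁ = x i₂ from congrArg x h)
  have ne13 : i₁ ≠ i₃ := fun h => hne 0 2 (by decide) (show x i₁ = x i₃ from congrArg x h)
  have ne14 : i₁ ≠ i₄ := fun h => hne 0 3 (by decide) (show x i₁ = x i₄ from congrArg x h)
  have ne23 : i₂ ≠ i₃ := fun h => hne 1 2 (by decide) (show x i₂ = x i₃ from congrArg x h)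
  have ne24 : i₂ ≠ i₄ := fun h => hne 1 3 (by decide) (show x i₂ = x i₄ from congrArg x h)
  have ne34 : i₃ ≠ i₄ := fun h => hne 2 3 (by decide) (show x i₃ = x i₄ from congrArg x h)
  obtain ⟨z, hz, hz1, hz4, hst, hs1, ht1⟩ :=
    exists_z (x i₁) (x i₂) (x i₃) (x i₄) hLI (hnorm i₂) (hnorm i₃) h24 h34
  set P : E4 →ₗ[ℝ] E4 :=
    (ℝ ∙ z).subtype ∘ₗ (Submodule.orthogonalProjection (ℝ ∙ z)).toLinearMap with hPdef
  have hPapply : ∀ w : E4, P w = ⟪z, w⟫ • z := by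
    intro w
    show (ℝ ∙ z).starProjection w = ⟪z, w⟫ • z
    rw [Submodule.starProjection_singleton, hz]
    norm_num
  have hProj : IsOrthProj P := by
    constructor
    · apply LinearMap.ext
      intro w
      show P (P w) = P w
      rw [hPapply w, hPapply (⟪z, w⟫ • z), real_inner_smul_right,
        real_inner_self_eq_norm_sq, hz]
      norm_num
    · intro u v
      show ⟪(ℝ ∙ z).starProjection u, v⟫
          = ⟪u, (ℝ ∙ z).starProjection v⟫
      exact Submodule.inner_starProjection_left_eq_right (K := ℝ ∙ z) u v
  classical
  have hON := on_family (x i₂) (x i₃) (x i₄) z ⟪z, x i₂⟫ ⟪z, x i₃⟫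
    (hnorm i₂) (hnorm i₃) (hnorm i₄) h24 h34 hz hz4 rfl rfl hst hs1 ht1
  set V : Fin 4 → E4 :=
    ![z, ‖x i₂ - ⟪z, x i₂⟫ • z‖⁻¹ • (x i₂ - ⟪z, x i₂⟫ • z),
      ‖x i₃ - ⟪z, x i₃⟫ • z‖⁻¹ • (x i₃ - ⟪z, x i₃⟫ • z), x i₄] with hV
  set a : Fin m → ℝ := fun i => if i = i₁ then (⟪z, x i₁⟫)⁻¹ else 0 with ha
  set b : Fin m → ℝ := fun i => if i = i₂ then ‖x i₂ - ⟪z, x i₂⟫ • z‖⁻¹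
    else if i = i₃ then ‖x i₃ - ⟪z, x i₃⟫ • z‖⁻¹
    else if i = i₄ then 1 else 0 with hb
  set F : Fin m → E4 := fun i => if i = i₁ then V 0 else if i = i₂ then V 1
    else if i = i₃ then V 2 else if i = i₄ then V 3 else 0 with hFdef
  have hfun : ∀ i : Fin m, a i • P (x i) + b i • (x i - P (x i)) = F i := by
    intro i
    by_cases e1 : i = i₁
    · subst e1
      rw [hFdef]
      simp only [ha, hb, if_pos rfl, if_neg ne12, if_neg ne13, if_neg ne14]
      rw [hPapply, zero_smul, add_zero, smul_smul, inv_mul_cancel₀ hz1, one_smul]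
      rfl
    · by_cases e2 : i = i₂
      · subst e2
        rw [hFdef]
        simp only [ha, hb, if_pos rfl, if_neg e1]
        rw [hPapply, zero_smul, zero_add]
        rfl
      · by_cases e3 : i = i₃
        · subst e3
          rw [hFdef]
          simp only [ha, hb, if_pos rfl, if_neg e1, if_neg e2]
          rw [hPapply, zero_smul, zero_add]
          rfl
        · by_cases e4 : i = i₄
          · subst e4
            rw [hFdef]
            simp only [ha, hb, if_pos rfl, if_neg e1, if_neg e2, if_neg e3]
            rw [hPapply, hz4]
            simp only [if_true, zero_smul, sub_zero, zero_add, one_smul]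
            rfl
          · rw [hFdef]
            simp only [ha, hb, if_neg e1, if_neg e2, if_neg e3, if_neg e4]
            rw [zero_smul, zero_smul, zero_add]
  refine ⟨P, hProj, a, b, ?_⟩
  intro y
  have step1 : ∑ i : Fin m, ⟪y, a i • P (x i) + b i • (x i - P (x i))⟫ ^ 2
      = ∑ i : Fin m, ⟪y, F i⟫ ^ 2 :=
    Finset.sum_congr rfl fun i _ => congrArg (fun v => ⟪y, v⟫ ^ 2) (hfun i)
  have step2 : ∑ i : Fin m, ⟪y, F i⟫ ^ 2
      = ∑ i ∈ ({i₁, i₂, i₃, i₄} : Finset (Fin m)), ⟪y, F i⟫ ^ 2 := by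
    refine (Finset.sum_subset (Finset.subset_univ _) ?_).symm
    intro i _ hi
    simp only [Finset.mem_insert, Finset.mem_singleton, not_or] at hi
    obtain ⟨d1, d2, d3, d4⟩ := hi
    rw [hFdef]
    simp only [if_neg d1, if_neg d2, if_neg d3, if_neg d4]
    rw [inner_zero_right]
    norm_num
  have hm1 : i₁ ∉ ({i₂, i₃, i₄} : Finset (Fin m)) := by
    simp [ne12, ne13, ne14]
  have hm2 : i₂ ∉ ({i₃, i₄} : Finset (Fin m)) := by
    simp [ne23, ne24]
  have hm3 : i₃ ∉ ({i₄} : Finset (Fin m)) := by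
    simp [ne34]
  have step3 : ∑ i ∈ ({i₁, i₂, i₃, i₄} : Finset (Fin m)), ⟪y, F i⟫ ^ 2
      = ∑ k : Fin 4, ⟪y, V k⟫ ^ 2 := by
    rw [Finset.sum_insert hm1, Finset.sum_insert hm2, Finset.sum_insert hm3,
      Finset.sum_singleton, Fin.sum_univ_four]
    rw [hFdef]
    simp only [if_pos rfl, if_neg ne12, if_neg ne13, if_neg ne14,
      if_neg (Ne.symm ne12), if_neg (Ne.symm ne13), if_neg (Ne.symm ne14),
      if_neg (Ne.symm ne23), if_neg (Ne.symm ne24), if_neg (Ne.symm ne34), if_true]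
    ring
  rw [step1, step2, step3]
  exact parseval_of_on V hON y
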